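/- For any symmetric positive semidefinite K₁, K₂ ∈ ℝ^{n×n} with K₁ ≥ K₂ (i.e. K₁ − K₂ positive semidefinite), one has F₀(K₁) ≥ F₀(K₂), i.e. F₀(K₁) − F₀(K₂) is positive semidefinite. -/

import Mathlib

open Matrix

section Aux

variable {m : ℕ}

open scoped MatrixOrder in
noncomputable def Matrix.PosSemidef.sqrt {A : Matrix (Fin m) (Fin m) ℝ} (_ : A.PosSemidef) :
    Matrix (Fin m) (Fin m) ℝ := CFC.sqrt A

open scoped MatrixOrder in
lemma Matrix.PosSemidef.sqrt_mul_self {A : Matrix (Fin m) (Fin m) ℝ} (hA : A.PosSemidef) :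
    hA.sqrt * hA.sqrt = A := CFC.sqrt_mul_sqrt_self A hA.nonneg

open scoped MatrixOrder in
lemma Matrix.PosSemidef.posSemidef_sqrt {A : Matrix (Fin m) (Fin m) ℝ} (hA : A.PosSemidef) :
    hA.sqrt.PosSemidef := (CFC.sqrt_nonneg A).posSemidef

private lemma psd_posDef_of_isUnit {A : Matrix (Fin m) (Fin m) ℝ}
    (hA : A.PosSemidef) (hdet : IsUnit A.det) : A.PosDef := by
  exact hA.posDef_iff_isUnit.mpr ((Matrix.isUnit_iff_isUnit_det A).mpr hdet)

private lemma posDef_sqrt' {A : Matrix (Fin m) (Fin m) ℝ} (hA : A.PosDef) :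
    hA.posSemidef.sqrt.PosDef := by
  apply psd_posDef_of_isUnit hA.posSemidef.posSemidef_sqrt
  have h : hA.posSemidef.sqrt.det * hA.posSemidef.sqrt.det = A.det := by
    rw [← det_mul, hA.posSemidef.sqrt_mul_self]
  refine isUnit_iff_ne_zero.mpr (fun h0 => ?_)
  rw [h0, mul_zero] at h
  exact hA.det_pos.ne' h.symm

private lemma smul_one_posDef {c : ℝ} (hc : 0 < c) :
    (c • 1 : Matrix (Fin m) (Fin m) ℝ).PosDef := by
  rw [smul_one_eq_diagonal]
  exact posDef_diagonal_iff.mpr (fun _ => hc)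

/-- Antitonicity of the inverse on positive definite matrices. -/
private lemma inv_sub_inv_psd {A B : Matrix (Fin m) (Fin m) ℝ}
    (hA : A.PosDef) (hB : B.PosDef) (hAB : (A - B).PosSemidef) :
    (B⁻¹ - A⁻¹).PosSemidef := by
  have hAdet : IsUnit A.det := isUnit_iff_ne_zero.mpr hA.det_pos.ne'
  have hAinv := hA.inv
  set R := hAinv.posSemidef.sqrt with hRdef
  have hRpd : R.PosDef := posDef_sqrt' hAinv
  have hRR : R * R = A⁻¹ := hAinv.posSemidef.sqrt_mul_self
  have hRH : Rᴴ = R := hRpd.isHermitian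
  have hRdet : IsUnit R.det := isUnit_iff_ne_zero.mpr hRpd.det_pos.ne'
  have hRAR : R * A * R = 1 := by
    have hArw : A = R⁻¹ * R⁻¹ := by
      rw [← Matrix.mul_inv_rev, hRR, Matrix.nonsing_inv_nonsing_inv A hAdet]
    rw [hArw, ← Matrix.mul_assoc, Matrix.mul_nonsing_inv R hRdet, Matrix.one_mul,
      Matrix.nonsing_inv_mul R hRdet]
  set Z := R * B * R with hZ
  have hZpsd : Z.PosSemidef := by
    have := hB.posSemidef.mul_mul_conjTranspose_same R
    rwa [hRH] at this
  have hZdet : IsUnit Z.det := by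
    rw [hZ, det_mul, det_mul]
    exact (hRdet.mul (isUnit_iff_ne_zero.mpr hB.det_pos.ne')).mul hRdet
  have hZpd : Z.PosDef := psd_posDef_of_isUnit hZpsd hZdet
  have h1Z : (1 - Z).PosSemidef := by
    have heq : R * (A - B) * R = 1 - Z := by
      rw [Matrix.mul_sub, Matrix.sub_mul, hRAR]
    have hc := hAB.mul_mul_conjTranspose_same R
    rw [hRH] at hc
    rwa [heq] at hc
  have hZinv := hZpd.inv
  set W := hZinv.posSemidef.sqrt with hWdef
  have hWpd : W.PosDef := posDef_sqrt' hZinv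
  have hWW : W * W = Z⁻¹ := hZinv.posSemidef.sqrt_mul_self
  have hWH : Wᴴ = W := hWpd.isHermitian
  have hWdet : IsUnit W.det := isUnit_iff_ne_zero.mpr hWpd.det_pos.ne'
  have hWZW : W * Z * W = 1 := by
    have hZrw : Z = W⁻¹ * W⁻¹ := by
      rw [← Matrix.mul_inv_rev, hWW, Matrix.nonsing_inv_nonsing_inv Z hZdet]
    rw [hZrw, ← Matrix.mul_assoc, Matrix.mul_nonsing_inv W hWdet, Matrix.one_mul,
      Matrix.nonsing_inv_mul W hWdet]
  have hZinv1 : (Z⁻¹ - 1).PosSemidef := by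
    have heq : W * (1 - Z) * W = Z⁻¹ - 1 := by
      rw [Matrix.mul_sub, Matrix.sub_mul, Matrix.mul_one, hWW, hWZW]
    have hc := h1Z.mul_mul_conjTranspose_same W
    rw [hWH] at hc
    rwa [heq] at hc
  have final : R * (Z⁻¹ - 1) * R = B⁻¹ - A⁻¹ := by
    have h1 : R * Z⁻¹ * R = B⁻¹ := by
      rw [hZ, Matrix.mul_inv_rev, Matrix.mul_inv_rev]
      simp only [← Matrix.mul_assoc]
      rw [Matrix.mul_nonsing_inv R hRdet, Matrix.one_mul, Matrix.mul_assoc,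
        Matrix.nonsing_inv_mul R hRdet, Matrix.mul_one]
    rw [Matrix.mul_sub, Matrix.sub_mul, Matrix.mul_one, hRR, h1]
  have hc := hZinv1.mul_mul_conjTranspose_same R
  rw [hRH] at hc
  rwa [final] at hc

/-- The key factorization of `F₀`. -/
private lemma F0_eq {H K S : Matrix (Fin m) (Fin m) ℝ}
    (hS : S.PosDef) (hSS : S * S = -H) (hK : K.PosSemidef) :
    (1 - K * H)⁻¹ * K = S⁻¹ * (1 - (1 + S * K * S)⁻¹) * S⁻¹ := by
  have hSH : Sᴴ = S := hS.isHermitian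
  have hSdet : IsUnit S.det := isUnit_iff_ne_zero.mpr hS.det_pos.ne'
  set X := S * K * S with hX
  have hXpsd : X.PosSemidef := by
    have := hK.mul_mul_conjTranspose_same S
    rwa [hSH] at this
  have h1X : (1 + X).PosDef := Matrix.PosDef.add_posSemidef Matrix.PosDef.one hXpsd
  have h1Xdet : IsUnit (1 + X).det := isUnit_iff_ne_zero.mpr h1X.det_pos.ne'
  have hfact : 1 - K * H = S⁻¹ * (1 + X) * S := by
    have h1 : S⁻¹ * (1 + X) * S = S⁻¹ * S + S⁻¹ * X * S := by
      rw [Matrix.mul_add, Matrix.add_mul, Matrix.mul_one]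
    have h2 : S⁻¹ * X * S = K * (S * S) := by
      rw [hX]
      simp only [← Matrix.mul_assoc]
      rw [Matrix.nonsing_inv_mul S hSdet, Matrix.one_mul]
    rw [h1, h2, Matrix.nonsing_inv_mul S hSdet, hSS, Matrix.mul_neg, sub_eq_add_neg]
  have hunit : IsUnit (1 - K * H).det := by
    rw [hfact, det_mul, det_mul]
    exact ((isUnit_nonsing_inv_det S hSdet).mul h1Xdet).mul hSdet
  have hmul : (1 - K * H) * (S⁻¹ * (1 - (1 + X)⁻¹) * S⁻¹) = K := by
    rw [hfact]
    have h3 : (1 + X) * (1 - (1 + X)⁻¹) = X := by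
      rw [Matrix.mul_sub, Matrix.mul_one, Matrix.mul_nonsing_inv _ h1Xdet,
        add_sub_cancel_left]
    calc S⁻¹ * (1 + X) * S * (S⁻¹ * (1 - (1 + X)⁻¹) * S⁻¹)
        = S⁻¹ * ((1 + X) * (S * S⁻¹) * (1 - (1 + X)⁻¹)) * S⁻¹ := by
          simp only [Matrix.mul_assoc]
      _ = S⁻¹ * ((1 + X) * (1 - (1 + X)⁻¹)) * S⁻¹ := by
          rw [Matrix.mul_nonsing_inv S hSdet, Matrix.mul_one]
      _ = S⁻¹ * X * S⁻¹ := by rw [h3, Matrix.mul_assoc]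
      _ = K := by
          rw [hX]
          simp only [← Matrix.mul_assoc]
          rw [Matrix.nonsing_inv_mul S hSdet, Matrix.one_mul, Matrix.mul_assoc,
            Matrix.mul_nonsing_inv S hSdet, Matrix.mul_one]
  calc (1 - K * H)⁻¹ * K
      = (1 - K * H)⁻¹ * ((1 - K * H) * (S⁻¹ * (1 - (1 + X)⁻¹) * S⁻¹)) := by rw [hmul]
    _ = S⁻¹ * (1 - (1 + X)⁻¹) * S⁻¹ := by
        rw [← Matrix.mul_assoc, Matrix.nonsing_inv_mul _ hunit, Matrix.one_mul]

end Aux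

/-- For symmetric positive semidefinite `K₁ ≥ K₂`, one has
`F₀(K₁) ≥ F₀(K₂)`, where `F₀(K) = (Iₙ − K H₃₃)⁻¹ K`. -/
theorem stmt_4 (n : ℕ) (hn : 1 ≤ n) (δ δ₁ : ℝ) (hδ : 0 < δ) (hδδ₁ : δ < δ₁)
    (H33 : Matrix (Fin n) (Fin n) ℝ) (hsym : H33ᵀ = H33)
    (hlb : (H33 + δ₁ • 1).PosSemidef) (hub : (-(δ • 1) - H33).PosSemidef) :
    ∀ K₁ K₂ : Matrix (Fin n) (Fin n) ℝ, K₁.PosSemidef → K₂.PosSemidef →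
      (K₁ - K₂).PosSemidef →
      ((1 - K₁ * H33)⁻¹ * K₁ - (1 - K₂ * H33)⁻¹ * K₂).PosSemidef := by
  intro K₁ K₂ hK₁ hK₂ hK
  have hM : (-H33).PosDef := by
    have h := Matrix.PosDef.posSemidef_add hub (smul_one_posDef hδ)
    have he : (-(δ • 1) - H33) + δ • (1 : Matrix (Fin n) (Fin n) ℝ) = -H33 := by abel
    rwa [he] at h
  set S := hM.posSemidef.sqrt with hSdef
  have hSpd : S.PosDef := posDef_sqrt' hM
  have hSS : S * S = -H33 := hM.posSemidef.sqrt_mul_self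
  have hSH : Sᴴ = S := hSpd.isHermitian
  have hSinv : S⁻¹.PosDef := hSpd.inv
  have hSinvH : (S⁻¹)ᴴ = S⁻¹ := hSinv.isHermitian
  have h1 := F0_eq hSpd hSS hK₁
  have h2 := F0_eq hSpd hSS hK₂
  set X₁ := S * K₁ * S with hX₁
  set X₂ := S * K₂ * S with hX₂
  have hX₁psd : X₁.PosSemidef := by
    have := hK₁.mul_mul_conjTranspose_same S; rwa [hSH] at this
  have hX₂psd : X₂.PosSemidef := by
    have := hK₂.mul_mul_conjTranspose_same S; rwa [hSH] at this
  have h1X₁ : (1 + X₁).PosDef := Matrix.PosDef.add_posSemidef Matrix.PosDef.one hX₁psd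
  have h1X₂ : (1 + X₂).PosDef := Matrix.PosDef.add_posSemidef Matrix.PosDef.one hX₂psd
  have hsub : ((1 + X₁) - (1 + X₂)).PosSemidef := by
    have hXsub : X₁ - X₂ = S * (K₁ - K₂) * S := by
      rw [hX₁, hX₂, Matrix.mul_sub, Matrix.sub_mul]
    have hc := hK.mul_mul_conjTranspose_same S
    rw [hSH] at hc
    have he : (1 + X₁) - (1 + X₂) = S * (K₁ - K₂) * S := by
      rw [← hXsub]; abel
    rwa [he]
  have hinv : ((1 + X₂)⁻¹ - (1 + X₁)⁻¹).PosSemidef := inv_sub_inv_psd h1X₁ h1X₂ hsub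
  have hc := hinv.mul_mul_conjTranspose_same S⁻¹
  rw [hSinvH] at hc
  have he : S⁻¹ * ((1 + X₂)⁻¹ - (1 + X₁)⁻¹) * S⁻¹
      = (1 - K₁ * H33)⁻¹ * K₁ - (1 - K₂ * H33)⁻¹ * K₂ := by
    rw [h1, h2]
    have hd : (1 + X₂)⁻¹ - (1 + X₁)⁻¹
        = (1 - (1 + X₁)⁻¹) - (1 - (1 + X₂)⁻¹) := by abel
    rw [hd, Matrix.mul_sub, Matrix.sub_mul]
  rwa [he] at hc
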